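/- Let a ≤ n be positive integers and let f: {0,1}^n → {0,1} be the conjunction of the first a coordinates, i.e. f(x) = 1 if and only if x_1 = x_2 = ⋯ = x_a = 1. Then f is an a-self-bounding function, ‖f‖_1 = 2^{−a}, and ‖f‖_∞ = 1; in particular ‖f‖_∞ = 2^a · ‖f‖_1, so the factor 3^a in the comparison ‖f‖_∞ ≤ 3^a‖f‖_1 for a-self-bounding functions cannot be improved below 2^a. -/
import Mathlib

noncomputable section

/-- A function `f : {0,1}^n → ℝ` is `a`-self-bounding. -/
def SelfBounding (n : ℕ) (a : ℝ) (f : (Fin n → Bool) → ℝ) : Prop :=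
  ∀ x : Fin n → Bool,
    (∀ i : Fin n,
      f x - min (f (Function.update x i false)) (f (Function.update x i true)) ≤ 1) ∧
    ∑ i : Fin n,
      (f x - min (f (Function.update x i false)) (f (Function.update x i true))) ≤ a * f x

/-- Expectation with respect to the uniform distribution on `{0,1}^n`. -/
def expect (n : ℕ) (g : (Fin n → Bool) → ℝ) : ℝ :=
  (∑ x : Fin n → Bool, g x) / 2 ^ n

theorem conjunction_norm_gap (n a : ℕ) (ha : 1 ≤ a) (han : a ≤ n)
    (f : (Fin n → Bool) → ℝ)
    (hf : ∀ x, f x = if ∀ i : Fin n, (i : ℕ) < a → x i = true then 1 else 0) :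
    SelfBounding n (a : ℝ) f ∧
      expect n (fun x => |f x|) = ((2 : ℝ) ^ a)⁻¹ ∧
      (⨆ x : Fin n → Bool, |f x|) = 1 ∧
      (⨆ x : Fin n → Bool, |f x|) = 2 ^ a * expect n (fun x => |f x|) := by
  have hnn : ∀ x, 0 ≤ f x := by
    intro x; rw [hf]; split <;> norm_num
  have hle1 : ∀ x, f x ≤ 1 := by
    intro x; rw [hf]; split <;> norm_num
  -- card of the subtype {i : Fin n // (i:ℕ) < a} is a
  have e2 : Fin a ≃ {i : Fin n // (i : ℕ) < a} :=
    { toFun := fun j => ⟨⟨j, lt_of_lt_of_le j.2 han⟩, j.2⟩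
      invFun := fun i => ⟨(i.1 : ℕ), i.2⟩
      left_inv := fun j => rfl
      right_inv := fun i => rfl }
  have hcard_lt : Fintype.card {i : Fin n // (i : ℕ) < a} = a := by
    rw [← Fintype.card_congr e2, Fintype.card_fin]
  have hcard_ge : Fintype.card {i : Fin n // ¬ (i : ℕ) < a} = n - a := by
    rw [Fintype.card_subtype_compl, hcard_lt, Fintype.card_fin]
  -- count of satisfying assignments
  have hP : Fintype.card {x : Fin n → Bool // ∀ i : Fin n, (i : ℕ) < a → x i = true}
      = 2 ^ (n - a) := by
    have e : {x : Fin n → Bool // ∀ i : Fin n, (i : ℕ) < a → x i = true}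
        ≃ ({i : Fin n // ¬ (i : ℕ) < a} → Bool) :=
      { toFun := fun x i => x.1 i.1
        invFun := fun y => ⟨fun i => if h : (i : ℕ) < a then true else y ⟨i, h⟩,
          fun i hi => by simp [hi]⟩
        left_inv := fun x => by
          apply Subtype.ext; funext i
          by_cases h : (i : ℕ) < a
          · simp [h, x.2 i h]
          · simp [h]
        right_inv := fun y => by
          funext i
          simp [i.2] }
    rw [Fintype.card_congr e, Fintype.card_fun, hcard_ge, Fintype.card_bool]
  have hsum : ∑ x : Fin n → Bool, f x = 2 ^ (n - a) := by
    have : ∑ x : Fin n → Bool, f x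
        = ∑ x : Fin n → Bool, (if ∀ i : Fin n, (i : ℕ) < a → x i = true then (1:ℝ) else 0) := by
      exact Finset.sum_congr rfl fun x _ => hf x
    rw [this, Finset.sum_boole, ← Fintype.card_subtype, hP]
    push_cast; ring
  have habs : ∀ x, |f x| = f x := fun x => abs_of_nonneg (hnn x)
  have hexp : expect n (fun x => |f x|) = ((2 : ℝ) ^ a)⁻¹ := by
    unfold expect
    simp only [habs]
    rw [hsum]
    rw [div_eq_iff (by positivity), inv_mul_eq_div, eq_div_iff (by positivity),
      ← pow_add, Nat.sub_add_cancel han]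
  have hbdd : BddAbove (Set.range fun x : Fin n → Bool => |f x|) :=
    (Set.finite_range _).bddAbove
  have hsup : (⨆ x : Fin n → Bool, |f x|) = 1 := by
    apply le_antisymm
    · exact ciSup_le fun x => by rw [habs]; exact hle1 x
    · have h1 : f (fun _ => true) = 1 := by rw [hf]; simp
      have := le_ciSup hbdd (fun _ => true)
      rwa [habs, h1] at this
  refine ⟨?_, hexp, hsup, ?_⟩
  · intro x
    by_cases hx : ∀ i : Fin n, (i : ℕ) < a → x i = true
    · have hfx : f x = 1 := by rw [hf, if_pos hx]
      constructor
      · intro i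
        have := le_min (hnn (Function.update x i false)) (hnn (Function.update x i true))
        rw [hfx]; linarith [this]
      · have hterm : ∀ i : Fin n,
            f x - min (f (Function.update x i false)) (f (Function.update x i true))
            = if (i : ℕ) < a then 1 else 0 := by
          intro i
          by_cases hi : (i : ℕ) < a
          · have h0 : f (Function.update x i false) = 0 := by
              rw [hf]
              have : ¬ ∀ j : Fin n, (j : ℕ) < a → Function.update x i false j = true := by
                intro h; have := h i hi; simp at this
              simp [this]
            have h1 : f (Function.update x i true) = 1 := by
              rw [hf]
              have : ∀ j : Fin n, (j : ℕ) < a → Function.update x i true j = true := by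
                intro j hj
                by_cases hji : j = i
                · subst hji; simp
                · rw [Function.update_of_ne hji]; exact hx j hj
              exact if_pos this
            rw [h0, h1, hfx]; norm_num [hi]
          · have hup : ∀ b, Function.update x i b = fun j => if j = i then b else x j := by
              intro b; funext j; by_cases hji : j = i
              · subst hji; simp
              · rw [Function.update_of_ne hji]; simp [hji]
            have hb : ∀ b, f (Function.update x i b) = 1 := by
              intro b
              rw [hf]
              have : ∀ j : Fin n, (j : ℕ) < a → Function.update x i b j = true := by
                intro j hj
                have hji : j ≠ i := by
                  intro h; subst h; exact hi hj
                rw [Function.update_of_ne hji]; exact hx j hj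
              exact if_pos this
            rw [hb, hb, hfx]; norm_num [hi]
        rw [Finset.sum_congr rfl fun i _ => hterm i, Finset.sum_boole,
          ← Fintype.card_subtype, hcard_lt, hfx]
        norm_num
    · have hfx : f x = 0 := by rw [hf]; simp [hx]
      constructor
      · intro i
        have := le_min (hnn (Function.update x i false)) (hnn (Function.update x i true))
        rw [hfx]; linarith
      · rw [hfx, mul_zero]
        apply Finset.sum_nonpos
        intro i _
        have := le_min (hnn (Function.update x i false)) (hnn (Function.update x i true))
        linarith
  · rw [hsup, hexp]
    rw [mul_inv_cancel₀ (by positivity)]
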